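/- Let N and R be positive integers, let I* > 0 and F_b be real numbers with F_b ≥ I*/2, and let D : {1,…,N} → ℕ with D_i ≥ 2 for all i and ∑_{i=1}^N ⌈log₂ D_i⌉ ≤ R. Let F : {1,…,N} → ℝ satisfy 0 ≤ F_i ≤ I* for all i, and F_i ≤ F_b for every i with D_i = 2. Then ∑_{i=1}^N F_i ≤ R · F_b. Consequently, under a total bit-rate constraint R, if there exists a binary quantization rule whose per-sensor Fisher information contribution F_b is at least half the full-observation Fisher information I* and at least that of any admissible binary rule, then employing R identical sensors each sending one bit is optimal. -/

import Mathlib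

/-- Under a total bit-rate constraint `∑ ⌈log₂ D_i⌉ ≤ R` (the ceiling
log being `Nat.clog 2`), if every per-sensor Fisher information contribution
satisfies `0 ≤ F_i ≤ I*`, every binary sensor (`D_i = 2`) satisfies `F_i ≤ F_b`,
and `F_b ≥ I*/2`, then the total Fisher information satisfies `∑ F_i ≤ R · F_b`;
hence `R` identical one-bit sensors (each achieving `F_b`) are optimal. -/
theorem binary_quantizers_optimal_under_rate_constraint
    (N R : ℕ) (hN : 0 < N) (hR : 0 < R)
    (Istar Fb : ℝ) (hIstar : 0 < Istar) (hFb : Istar / 2 ≤ Fb)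
    (D : Fin N → ℕ) (hD : ∀ i, 2 ≤ D i)
    (hrate : ∑ i, Nat.clog 2 (D i) ≤ R)
    (F : Fin N → ℝ)
    (hF_nonneg : ∀ i, 0 ≤ F i)
    (hF_dpi : ∀ i, F i ≤ Istar)
    (hF_binary : ∀ i, D i = 2 → F i ≤ Fb) :
    ∑ i, F i ≤ (R : ℝ) * Fb := by
  have hFb0 : 0 ≤ Fb := le_trans (by linarith) hFb
  have key : ∀ i, F i ≤ (Nat.clog 2 (D i) : ℝ) * Fb := by
    intro i
    rcases eq_or_lt_of_le (hD i) with h2 | h3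
    · have : Nat.clog 2 (D i) = 1 := by rw [← h2]; exact Nat.clog_eq_one le_rfl le_rfl
      rw [this]
      simpa using hF_binary i h2.symm
    · have hc : 1 < Nat.clog 2 (D i) := by
        rw [Nat.lt_clog_iff_pow_lt one_lt_two]
        simpa using h3
      have : (2 : ℝ) ≤ (Nat.clog 2 (D i) : ℝ) := by exact_mod_cast hc
      calc F i ≤ Istar := hF_dpi i
        _ ≤ 2 * Fb := by linarith
        _ ≤ (Nat.clog 2 (D i) : ℝ) * Fb := by
            exact mul_le_mul_of_nonneg_right this hFb0
  calc ∑ i, F i ≤ ∑ i, (Nat.clog 2 (D i) : ℝ) * Fb := Finset.sum_le_sum fun i _ => key i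
    _ = (∑ i, (Nat.clog 2 (D i) : ℝ)) * Fb := by rw [Finset.sum_mul]
    _ ≤ (R : ℝ) * Fb := by
        apply mul_le_mul_of_nonneg_right _ hFb0
        exact_mod_cast hrate
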